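/- Model-based performance difference bound (Theorem 4.1): for arbitrary policies π, π' and learned dynamics P_m, the true return difference satisfies |ΔJ(π,π') − L^π_m(π')/(1-γ)| ≤ 4 δ^max ε / (1-γ), where L^π_m(π') = E_{s∼d^π_m, a∼π}[(π'(a|s)/π(a|s)) A^π_m(s,a)], δ^max = max_{s,a,s'} |r(s,a,s') + γV^π_m(s') − V^π_m(s)|, ε = ε_π ε_m + (γ/(1-γ))(ε_π² + 2 ε_π ε_m), ε_π = max_s D_TV(π'(·|s)‖π(·|s)), ε_m = max_{s,a} D_TV(P(·|s,a)‖P_m(·|s,a)). -/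

import Mathlib

open Finset

private lemma aux_contract {T S : Type*} [Fintype S] [Fintype T] (K : T → S → ℝ)
    (hK0 : ∀ t s, 0 ≤ K t s) (hK1 : ∀ t, ∑ s, K t s = 1) (x : T → ℝ) :
    ∑ s, |∑ t, x t * K t s| ≤ ∑ t, |x t| := by
  calc ∑ s, |∑ t, x t * K t s| ≤ ∑ s, ∑ t, |x t| * K t s := by
        refine Finset.sum_le_sum fun s _ => ?_
        refine le_trans (Finset.abs_sum_le_sum_abs _ _) (le_of_eq ?_)
        exact Finset.sum_congr rfl fun t _ => by rw [abs_mul, abs_of_nonneg (hK0 t s)]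
    _ = ∑ t, |x t| * ∑ s, K t s := by
        rw [Finset.sum_comm]
        exact Finset.sum_congr rfl fun t _ => (Finset.mul_sum _ _ _).symm
    _ = ∑ t, |x t| := by simp [hK1]

private lemma aux_exists {S : Type*} [Fintype S] (γ : ℝ) (hγ0 : 0 ≤ γ) (hγ1 : γ < 1)
    (K : S → S → ℝ) (hK0 : ∀ s s', 0 ≤ K s s') (hK1 : ∀ s, ∑ s', K s s' = 1)
    (μ : S → ℝ) :
    ∃ d : S → ℝ, ∀ s, d s = (1 - γ) * μ s + γ * ∑ s₀, d s₀ * K s₀ s := by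
  let f : (S → ℝ) →ₗ[ℝ] (S → ℝ) :=
    { toFun := fun x s => x s - γ * ∑ s₀, x s₀ * K s₀ s
      map_add' := by
        intro x y; funext s
        simp only [Pi.add_apply]
        have h : ∑ s₀, (x s₀ + y s₀) * K s₀ s
            = (∑ s₀, x s₀ * K s₀ s) + ∑ s₀, y s₀ * K s₀ s := by
          rw [← Finset.sum_add_distrib]
          exact Finset.sum_congr rfl fun _ _ => add_mul _ _ _
        rw [h]; ring
      map_smul' := by
        intro c x; funext s
        simp only [Pi.smul_apply, smul_eq_mul, RingHom.id_apply]
        have h : ∑ s₀, (c * x s₀) * K s₀ s = c * ∑ s₀, x s₀ * K s₀ s := by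
          rw [Finset.mul_sum]
          exact Finset.sum_congr rfl fun _ _ => by ring
        rw [h]; ring }
  have hker : ∀ z : S → ℝ, f z = 0 → z = 0 := by
    intro z hz
    have hz' : ∀ s, z s = γ * ∑ s₀, z s₀ * K s₀ s := by
      intro s
      have := congrFun hz s
      simp only [f, LinearMap.coe_mk, AddHom.coe_mk, Pi.zero_apply] at this
      linarith
    have h1 : ∑ s, |z s| ≤ γ * ∑ s, |z s| := by
      calc ∑ s, |z s| = ∑ s, |γ * ∑ s₀, z s₀ * K s₀ s| :=
            Finset.sum_congr rfl fun s _ => by rw [hz' s]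
        _ = γ * ∑ s, |∑ s₀, z s₀ * K s₀ s| := by
            rw [Finset.mul_sum]
            exact Finset.sum_congr rfl fun s _ => by rw [abs_mul, abs_of_nonneg hγ0]
        _ ≤ γ * ∑ s, |z s| := mul_le_mul_of_nonneg_left (aux_contract K hK0 hK1 z) hγ0
    have h2 : ∑ s, |z s| = 0 := by
      have h3 : 0 ≤ ∑ s, |z s| := Finset.sum_nonneg fun s _ => abs_nonneg _
      nlinarith
    funext s
    have := (Finset.sum_eq_zero_iff_of_nonneg (fun s _ => abs_nonneg (z s))).mp h2 s
      (Finset.mem_univ s)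
    simpa using abs_eq_zero.mp this
  have hinj : Function.Injective f := by
    rw [← LinearMap.ker_eq_bot, LinearMap.ker_eq_bot']
    exact fun z hz => hker z hz
  obtain ⟨d, hd⟩ := LinearMap.injective_iff_surjective.mp hinj (fun s => (1 - γ) * μ s)
  refine ⟨d, fun s => ?_⟩
  have := congrFun hd s
  simp only [f, LinearMap.coe_mk, AddHom.coe_mk] at this
  linarith

private lemma aux_norm {S : Type*} [Fintype S] (γ : ℝ) (hγ0 : 0 ≤ γ) (hγ1 : γ < 1)
    (K : S → S → ℝ) (hK0 : ∀ s s', 0 ≤ K s s') (hK1 : ∀ s, ∑ s', K s s' = 1)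
    (μ : S → ℝ) (hμ0 : ∀ s, 0 ≤ μ s) (hμ1 : ∑ s, μ s = 1) (d : S → ℝ)
    (hd : ∀ s, d s = (1 - γ) * μ s + γ * ∑ s₀, d s₀ * K s₀ s) :
    ∑ s, |d s| ≤ 1 := by
  have h1 : ∑ s, |d s| ≤ (1 - γ) * ∑ s, μ s + γ * ∑ s, |∑ s₀, d s₀ * K s₀ s| := by
    calc ∑ s, |d s| = ∑ s, |(1 - γ) * μ s + γ * ∑ s₀, d s₀ * K s₀ s| :=
          Finset.sum_congr rfl fun s _ => by rw [hd s]
      _ ≤ ∑ s, ((1 - γ) * μ s + γ * |∑ s₀, d s₀ * K s₀ s|) := by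
          refine Finset.sum_le_sum fun s _ => ?_
          refine le_trans (abs_add_le _ _) ?_
          rw [abs_mul, abs_of_nonneg (hμ0 s), abs_of_nonneg (by linarith : (0:ℝ) ≤ 1 - γ),
            abs_mul, abs_of_nonneg hγ0]
      _ = (1 - γ) * ∑ s, μ s + γ * ∑ s, |∑ s₀, d s₀ * K s₀ s| := by
          rw [Finset.sum_add_distrib, ← Finset.mul_sum, ← Finset.mul_sum]
  have h2 := aux_contract K hK0 hK1 d
  nlinarith [mul_le_mul_of_nonneg_left h2 hγ0]

private lemma aux_abs_sum {S : Type*} [Fintype S] (c w : S → ℝ) (B C : ℝ) (hB : 0 ≤ B)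
    (hw : ∀ s, |w s| ≤ B) (hc : ∑ s, |c s| ≤ C) : |∑ s, c s * w s| ≤ C * B := by
  calc |∑ s, c s * w s| ≤ ∑ s, |c s| * |w s| := by
        refine le_trans (Finset.abs_sum_le_sum_abs _ _) (le_of_eq ?_)
        exact Finset.sum_congr rfl fun s _ => abs_mul _ _
    _ ≤ ∑ s, |c s| * B :=
        Finset.sum_le_sum fun s _ => mul_le_mul_of_nonneg_left (hw s) (abs_nonneg _)
    _ = (∑ s, |c s|) * B := (Finset.sum_mul _ _ _).symm
    _ ≤ C * B := mul_le_mul_of_nonneg_right hc hB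

private lemma aux_diff {S : Type*} [Fintype S] [Nonempty S] (γ : ℝ) (hγ0 : 0 ≤ γ) (hγ1 : γ < 1)
    (μ : S → ℝ) (K1 K2 : S → S → ℝ)
    (hK20 : ∀ s s', 0 ≤ K2 s s') (hK21 : ∀ s, ∑ s', K2 s s' = 1)
    (d1 d2 : S → ℝ)
    (hd1 : ∀ s, d1 s = (1 - γ) * μ s + γ * ∑ s₀, d1 s₀ * K1 s₀ s)
    (hd2 : ∀ s, d2 s = (1 - γ) * μ s + γ * ∑ s₀, d2 s₀ * K2 s₀ s)
    (hd1n : ∑ s, |d1 s| ≤ 1)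
    (c : ℝ) (hc : ∀ s, ∑ s', |K1 s s' - K2 s s'| ≤ c) :
    ∑ s, |d1 s - d2 s| ≤ γ * c / (1 - γ) := by
  have hc0 : 0 ≤ c :=
    le_trans (Finset.sum_nonneg fun _ _ => abs_nonneg _) (hc (Classical.arbitrary S))
  have hsplit : ∀ s, d1 s - d2 s
      = γ * ((∑ s₀, (d1 s₀ - d2 s₀) * K2 s₀ s) + ∑ s₀, d1 s₀ * (K1 s₀ s - K2 s₀ s)) := by
    intro s
    rw [hd1 s, hd2 s]
    have h : (∑ s₀, (d1 s₀ - d2 s₀) * K2 s₀ s) + ∑ s₀, d1 s₀ * (K1 s₀ s - K2 s₀ s)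
        = (∑ s₀, d1 s₀ * K1 s₀ s) - ∑ s₀, d2 s₀ * K2 s₀ s := by
      rw [← Finset.sum_add_distrib, ← Finset.sum_sub_distrib]
      exact Finset.sum_congr rfl fun s₀ _ => by ring
    rw [h]; ring
  have hA : ∑ s, |∑ s₀, (d1 s₀ - d2 s₀) * K2 s₀ s| ≤ ∑ s, |d1 s - d2 s| :=
    aux_contract K2 hK20 hK21 _
  have hB : ∑ s, |∑ s₀, d1 s₀ * (K1 s₀ s - K2 s₀ s)| ≤ c := by
    calc ∑ s, |∑ s₀, d1 s₀ * (K1 s₀ s - K2 s₀ s)|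
        ≤ ∑ s, ∑ s₀, |d1 s₀| * |K1 s₀ s - K2 s₀ s| := by
          refine Finset.sum_le_sum fun s _ => ?_
          refine le_trans (Finset.abs_sum_le_sum_abs _ _) (le_of_eq ?_)
          exact Finset.sum_congr rfl fun s₀ _ => abs_mul _ _
      _ = ∑ s₀, |d1 s₀| * ∑ s, |K1 s₀ s - K2 s₀ s| := by
          rw [Finset.sum_comm]
          exact Finset.sum_congr rfl fun s₀ _ => (Finset.mul_sum _ _ _).symm
      _ ≤ ∑ s₀, |d1 s₀| * c :=
          Finset.sum_le_sum fun s₀ _ => mul_le_mul_of_nonneg_left (hc s₀) (abs_nonneg _)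
      _ = (∑ s₀, |d1 s₀|) * c := (Finset.sum_mul _ _ _).symm
      _ ≤ 1 * c := mul_le_mul_of_nonneg_right hd1n hc0
      _ = c := one_mul c
  have hstep : ∑ s, |d1 s - d2 s| ≤ γ * (∑ s, |d1 s - d2 s| + c) := by
    calc ∑ s, |d1 s - d2 s|
        = ∑ s, |γ * ((∑ s₀, (d1 s₀ - d2 s₀) * K2 s₀ s)
            + ∑ s₀, d1 s₀ * (K1 s₀ s - K2 s₀ s))| :=
          Finset.sum_congr rfl fun s _ => by rw [hsplit s]
      _ ≤ ∑ s, γ * (|∑ s₀, (d1 s₀ - d2 s₀) * K2 s₀ s|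
            + |∑ s₀, d1 s₀ * (K1 s₀ s - K2 s₀ s)|) := by
          refine Finset.sum_le_sum fun s _ => ?_
          rw [abs_mul, abs_of_nonneg hγ0]
          exact mul_le_mul_of_nonneg_left (abs_add_le _ _) hγ0
      _ = γ * ((∑ s, |∑ s₀, (d1 s₀ - d2 s₀) * K2 s₀ s|)
            + ∑ s, |∑ s₀, d1 s₀ * (K1 s₀ s - K2 s₀ s)|) := by
          rw [← Finset.mul_sum, Finset.sum_add_distrib]
      _ ≤ γ * (∑ s, |d1 s - d2 s| + c) :=
          mul_le_mul_of_nonneg_left (add_le_add hA hB) hγ0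
  have h1γ : (0:ℝ) < 1 - γ := by linarith
  rw [le_div_iff₀ h1γ]
  nlinarith

private lemma aux_perf {S A : Type*} [Fintype S] [Fintype A] (γ : ℝ)
    (β : S → A → ℝ) (hβ1 : ∀ s, ∑ a, β s a = 1)
    (Q : S → A → S → ℝ) (hQ1 : ∀ s a, ∑ s', Q s a s' = 1)
    (r : S → A → S → ℝ) (W f μ dβ : S → ℝ)
    (hW : ∀ s, W s = ∑ a, β s a * ∑ s', Q s a s' * (r s a s' + γ * W s'))
    (hdβ : ∀ s, dβ s = (1 - γ) * μ s + γ * ∑ s₀, ∑ a, dβ s₀ * β s₀ a * Q s₀ a s) :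
    ∑ s, dβ s * ∑ a, β s a * ∑ s', Q s a s' * (r s a s' + γ * f s' - f s)
      = (1 - γ) * ((∑ s, μ s * W s) - ∑ s, μ s * f s) := by
  have claim : ∀ g : S → ℝ, γ * ∑ s, dβ s * ∑ a, β s a * ∑ s', Q s a s' * g s'
      = (∑ s, dβ s * g s) - (1 - γ) * ∑ s, μ s * g s := by
    intro g
    have h1 : (∑ s, dβ s * g s) - (1 - γ) * ∑ s, μ s * g s
        = ∑ s, (γ * ∑ s₀, ∑ a, dβ s₀ * β s₀ a * Q s₀ a s) * g s := by
      rw [Finset.mul_sum, ← Finset.sum_sub_distrib]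
      refine Finset.sum_congr rfl fun s _ => ?_
      rw [hdβ s]; ring
    rw [h1]
    have h2 : γ * ∑ s, dβ s * ∑ a, β s a * ∑ s', Q s a s' * g s'
        = ∑ s, ∑ a, ∑ s', γ * (dβ s * β s a * Q s a s' * g s') := by
      simp only [Finset.mul_sum]
      exact Finset.sum_congr rfl fun s _ => Finset.sum_congr rfl fun a _ =>
        Finset.sum_congr rfl fun s' _ => by ring
    have h3 : ∑ s, (γ * ∑ s₀, ∑ a, dβ s₀ * β s₀ a * Q s₀ a s) * g s
        = ∑ s₀, ∑ a, ∑ s, γ * (dβ s₀ * β s₀ a * Q s₀ a s * g s) := by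
      simp only [Finset.sum_mul, Finset.mul_sum]
      rw [Finset.sum_comm]
      refine Finset.sum_congr rfl fun s₀ _ => ?_
      rw [Finset.sum_comm]
      exact Finset.sum_congr rfl fun a _ => Finset.sum_congr rfl fun s _ => by ring
    rw [h2, h3]
  have inner : ∀ (h : S → ℝ) (s : S) (a : A), ∑ s', Q s a s' * (r s a s' + γ * h s' - h s)
      = (∑ s', Q s a s' * r s a s') + γ * (∑ s', Q s a s' * h s') - h s := by
    intro h s a
    have e : ∀ s' : S, Q s a s' * (r s a s' + γ * h s' - h s)
        = Q s a s' * r s a s' + γ * (Q s a s' * h s') - Q s a s' * h s := fun s' => by ring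
    rw [Finset.sum_congr rfl fun s' _ => e s', Finset.sum_sub_distrib, Finset.sum_add_distrib,
      ← Finset.mul_sum, ← Finset.sum_mul, hQ1, one_mul]
  have outer : ∀ s, ∑ a, β s a * ∑ s', Q s a s' * (r s a s' + γ * f s' - f s)
      = (∑ a, β s a * ∑ s', Q s a s' * r s a s')
        + γ * (∑ a, β s a * ∑ s', Q s a s' * f s') - f s := by
    intro s
    rw [Finset.sum_congr rfl fun a _ => by rw [inner f s a]]
    have e : ∀ a : A, β s a * ((∑ s', Q s a s' * r s a s') + γ * (∑ s', Q s a s' * f s') - f s)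
        = β s a * (∑ s', Q s a s' * r s a s')
          + γ * (β s a * ∑ s', Q s a s' * f s') - β s a * f s := fun a => by ring
    rw [Finset.sum_congr rfl fun a _ => e a, Finset.sum_sub_distrib, Finset.sum_add_distrib,
      ← Finset.mul_sum, ← Finset.sum_mul, hβ1, one_mul]
  have innerV : ∀ (s : S) (a : A), ∑ s', Q s a s' * (r s a s' + γ * W s')
      = (∑ s', Q s a s' * r s a s') + γ * (∑ s', Q s a s' * W s') := by
    intro s a
    have e : ∀ s' : S, Q s a s' * (r s a s' + γ * W s')
        = Q s a s' * r s a s' + γ * (Q s a s' * W s') := fun s' => by ring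
    rw [Finset.sum_congr rfl fun s' _ => e s', Finset.sum_add_distrib, ← Finset.mul_sum]
  have hW2 : ∀ s, W s = (∑ a, β s a * ∑ s', Q s a s' * r s a s')
      + γ * (∑ a, β s a * ∑ s', Q s a s' * W s') := by
    intro s
    rw [hW s, Finset.sum_congr rfl fun a _ => by rw [innerV s a]]
    have e : ∀ a : A, β s a * ((∑ s', Q s a s' * r s a s') + γ * ∑ s', Q s a s' * W s')
        = β s a * (∑ s', Q s a s' * r s a s') + γ * (β s a * ∑ s', Q s a s' * W s') :=
      fun a => by ring
    rw [Finset.sum_congr rfl fun a _ => e a, Finset.sum_add_distrib, ← Finset.mul_sum]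
  have main : ∑ s, dβ s * ∑ a, β s a * ∑ s', Q s a s' * (r s a s' + γ * f s' - f s)
      = (∑ s, dβ s * ∑ a, β s a * ∑ s', Q s a s' * r s a s')
        + γ * (∑ s, dβ s * ∑ a, β s a * ∑ s', Q s a s' * f s')
        - ∑ s, dβ s * f s := by
    rw [Finset.sum_congr rfl fun s _ => by rw [outer s]]
    have e : ∀ s : S, dβ s * ((∑ a, β s a * ∑ s', Q s a s' * r s a s')
          + γ * (∑ a, β s a * ∑ s', Q s a s' * f s') - f s)
        = dβ s * (∑ a, β s a * ∑ s', Q s a s' * r s a s')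
          + γ * (dβ s * ∑ a, β s a * ∑ s', Q s a s' * f s') - dβ s * f s := fun s => by ring
    rw [Finset.sum_congr rfl fun s _ => e s, Finset.sum_sub_distrib, Finset.sum_add_distrib,
      ← Finset.mul_sum]
  have hR : ∑ s, dβ s * ∑ a, β s a * ∑ s', Q s a s' * r s a s'
      = (∑ s, dβ s * W s) - γ * ∑ s, dβ s * ∑ a, β s a * ∑ s', Q s a s' * W s' := by
    rw [Finset.mul_sum, ← Finset.sum_sub_distrib]
    refine Finset.sum_congr rfl fun s _ => ?_
    linear_combination (-(dβ s)) * (hW2 s)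
  have cf := claim f
  have cW := claim W
  rw [main, hR]
  linear_combination cf - cW

private lemma aux_identity {S A : Type*} [Fintype S] [Fintype A]
    (π π' : S → A → ℝ) (d d' dmm : S → ℝ) (AP Am : S → A → ℝ)
    (F1 : ∀ s, ∑ a, π s a * Am s a = 0) :
    (∑ s, d' s * ∑ a, π' s a * AP s a) - (∑ s, d s * ∑ a, π s a * AP s a)
      - (∑ s, dmm s * ∑ a, π' s a * Am s a) + (∑ s, dmm s * ∑ a, π s a * Am s a)
    = (∑ s, d' s * ∑ a, (π' s a - π s a) * (AP s a - Am s a))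
      + (∑ s, (d' s - dmm s) * ∑ a, (π' s a - π s a) * Am s a)
      + (∑ s, (d' s - d s) * ∑ a, π s a * (AP s a - Am s a)) := by
  simp only [← Finset.sum_sub_distrib, ← Finset.sum_add_distrib]
  refine Finset.sum_congr rfl fun s _ => ?_
  simp only [sub_mul, mul_sub, Finset.sum_sub_distrib]
  linear_combination (d' s - d s) * F1 s

/-- Theorem 4.1: model-based performance difference bound
`|ΔJ(π,π') − L^π_m(π')/(1-γ)| ≤ 4 δ^max ε / (1-γ)`. -/
theorem stmt9 {S A : Type*} [Fintype S] [Fintype A] [Nonempty S] [Nonempty A]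
    (γ : ℝ) (hγ0 : 0 ≤ γ) (hγ1 : γ < 1)
    (π π' : S → A → ℝ)
    (hπpos : ∀ s a, 0 < π s a) (hπ1 : ∀ s, ∑ a, π s a = 1)
    (hπ'0 : ∀ s a, 0 ≤ π' s a) (hπ'1 : ∀ s, ∑ a, π' s a = 1)
    (P Pm : S → A → S → ℝ)
    (hP0 : ∀ s a s', 0 ≤ P s a s') (hP1 : ∀ s a, ∑ s', P s a s' = 1)
    (hPm0 : ∀ s a s', 0 ≤ Pm s a s') (hPm1 : ∀ s a, ∑ s', Pm s a s' = 1)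
    (μ : S → ℝ) (hμ0 : ∀ s, 0 ≤ μ s) (hμ1 : ∑ s, μ s = 1)
    (r : S → A → S → ℝ)
    -- value functions of π, π' under true dynamics, and of π under model dynamics
    (V V' Vm : S → ℝ)
    (hV : ∀ s, V s = ∑ a, π s a * ∑ s', P s a s' * (r s a s' + γ * V s'))
    (hV' : ∀ s, V' s = ∑ a, π' s a * ∑ s', P s a s' * (r s a s' + γ * V' s'))
    (hVm : ∀ s, Vm s = ∑ a, π s a * ∑ s', Pm s a s' * (r s a s' + γ * Vm s'))
    -- discounted stationary state distribution of π under model dynamics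
    (dm : S → ℝ)
    (hdm : ∀ s, dm s = (1 - γ) * μ s + γ * ∑ s₀, ∑ a, dm s₀ * π s₀ a * Pm s₀ a s)
    (J J' L δmax εpi εm ε : ℝ)
    (hJ : J = ∑ s, μ s * V s) (hJ' : J' = ∑ s, μ s * V' s)
    (hL : L = ∑ s, ∑ a, dm s * π s a *
      ((π' s a / π s a) * ∑ s', Pm s a s' * (r s a s' + γ * Vm s' - Vm s)))
    (hδmax : δmax = Finset.univ.sup' Finset.univ_nonempty
      (fun t : S × A × S => |r t.1 t.2.1 t.2.2 + γ * Vm t.2.2 - Vm t.1|))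
    (hεpi : εpi = Finset.univ.sup' Finset.univ_nonempty
      (fun s : S => (1 / 2) * ∑ a, |π' s a - π s a|))
    (hεm : εm = Finset.univ.sup' Finset.univ_nonempty
      (fun p : S × A => (1 / 2) * ∑ s', |P p.1 p.2 s' - Pm p.1 p.2 s'|))
    (hε : ε = εpi * εm + (γ / (1 - γ)) * (εpi ^ 2 + 2 * εpi * εm)) :
    |(J' - J) - L / (1 - γ)| ≤ 4 * δmax * ε / (1 - γ) := by
  classical
  have h1γ : (0:ℝ) < 1 - γ := by linarith
  -- elementary bounds
  have hδb : ∀ s a s', |r s a s' + γ * Vm s' - Vm s| ≤ δmax := by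
    intro s a s'
    rw [hδmax]
    exact Finset.le_sup' (fun t : S × A × S => |r t.1 t.2.1 t.2.2 + γ * Vm t.2.2 - Vm t.1|)
      (Finset.mem_univ (s, a, s'))
  have hδ0 : 0 ≤ δmax :=
    le_trans (abs_nonneg _)
      (hδb (Classical.arbitrary S) (Classical.arbitrary A) (Classical.arbitrary S))
  have hεpiS : ∀ s, ∑ a, |π' s a - π s a| ≤ 2 * εpi := by
    intro s
    have h := Finset.le_sup' (fun s : S => (1 / 2) * ∑ a, |π' s a - π s a|) (Finset.mem_univ s)
    rw [← hεpi] at h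
    linarith
  have hεpi0 : 0 ≤ εpi := by
    have h := Finset.le_sup' (fun s : S => (1 / 2) * ∑ a, |π' s a - π s a|)
      (Finset.mem_univ (Classical.arbitrary S))
    rw [← hεpi] at h
    have h0 : (0:ℝ) ≤ (1 / 2) * ∑ a, |π' (Classical.arbitrary S) a - π (Classical.arbitrary S) a| := by
      have := Finset.sum_nonneg (fun a (_ : a ∈ (Finset.univ : Finset A)) =>
        abs_nonneg (π' (Classical.arbitrary S) a - π (Classical.arbitrary S) a))
      linarith
    linarith
  have hεmS : ∀ s a, ∑ s', |P s a s' - Pm s a s'| ≤ 2 * εm := by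
    intro s a
    have h := Finset.le_sup' (fun p : S × A => (1 / 2) * ∑ s', |P p.1 p.2 s' - Pm p.1 p.2 s'|)
      (Finset.mem_univ (s, a))
    rw [← hεm] at h
    linarith
  have hεm0 : 0 ≤ εm := by
    have h := hεmS (Classical.arbitrary S) (Classical.arbitrary A)
    have h0 : (0:ℝ) ≤ ∑ s', |P (Classical.arbitrary S) (Classical.arbitrary A) s'
        - Pm (Classical.arbitrary S) (Classical.arbitrary A) s'| :=
      Finset.sum_nonneg fun _ _ => abs_nonneg _
    linarith
  -- zero advantage of π under the model
  have F1 : ∀ s, ∑ a, π s a * ∑ s', Pm s a s' * (r s a s' + γ * Vm s' - Vm s) = 0 := by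
    intro s
    have hAmsplit : ∀ a, (∑ s', Pm s a s' * (r s a s' + γ * Vm s' - Vm s))
        = (∑ s', Pm s a s' * (r s a s' + γ * Vm s')) - Vm s := by
      intro a
      have e : ∀ s' : S, Pm s a s' * (r s a s' + γ * Vm s' - Vm s)
          = Pm s a s' * (r s a s' + γ * Vm s') - Pm s a s' * Vm s := fun s' => by ring
      rw [Finset.sum_congr rfl fun s' _ => e s', Finset.sum_sub_distrib, ← Finset.sum_mul,
        hPm1, one_mul]
    have e : ∀ a : A, π s a * ∑ s', Pm s a s' * (r s a s' + γ * Vm s' - Vm s)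
        = π s a * (∑ s', Pm s a s' * (r s a s' + γ * Vm s')) - π s a * Vm s := by
      intro a; rw [hAmsplit a]; ring
    rw [Finset.sum_congr rfl fun a _ => e a, Finset.sum_sub_distrib, ← Finset.sum_mul,
      hπ1, one_mul, ← hVm s]
    ring
  -- kernels
  have hK'0 : ∀ s₀ s, 0 ≤ ∑ a, π' s₀ a * P s₀ a s := fun s₀ s =>
    Finset.sum_nonneg fun a _ => mul_nonneg (hπ'0 s₀ a) (hP0 s₀ a s)
  have hK'1 : ∀ s₀, ∑ s, ∑ a, π' s₀ a * P s₀ a s = 1 := by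
    intro s₀
    rw [Finset.sum_comm]
    calc ∑ a, ∑ s, π' s₀ a * P s₀ a s = ∑ a, π' s₀ a * ∑ s, P s₀ a s :=
          Finset.sum_congr rfl fun a _ => (Finset.mul_sum _ _ _).symm
      _ = 1 := by simp [hP1, hπ'1 s₀]
  have hK0 : ∀ s₀ s, 0 ≤ ∑ a, π s₀ a * P s₀ a s := fun s₀ s =>
    Finset.sum_nonneg fun a _ => mul_nonneg (le_of_lt (hπpos s₀ a)) (hP0 s₀ a s)
  have hK1 : ∀ s₀, ∑ s, ∑ a, π s₀ a * P s₀ a s = 1 := by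
    intro s₀
    rw [Finset.sum_comm]
    calc ∑ a, ∑ s, π s₀ a * P s₀ a s = ∑ a, π s₀ a * ∑ s, P s₀ a s :=
          Finset.sum_congr rfl fun a _ => (Finset.mul_sum _ _ _).symm
      _ = 1 := by simp [hP1, hπ1 s₀]
  have hKm0 : ∀ s₀ s, 0 ≤ ∑ a, π s₀ a * Pm s₀ a s := fun s₀ s =>
    Finset.sum_nonneg fun a _ => mul_nonneg (le_of_lt (hπpos s₀ a)) (hPm0 s₀ a s)
  have hKm1 : ∀ s₀, ∑ s, ∑ a, π s₀ a * Pm s₀ a s = 1 := by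
    intro s₀
    rw [Finset.sum_comm]
    calc ∑ a, ∑ s, π s₀ a * Pm s₀ a s = ∑ a, π s₀ a * ∑ s, Pm s₀ a s :=
          Finset.sum_congr rfl fun a _ => (Finset.mul_sum _ _ _).symm
      _ = 1 := by simp [hPm1, hπ1 s₀]
  -- stationary distributions of π' and π under the true dynamics
  obtain ⟨d', hd'0⟩ := aux_exists γ hγ0 hγ1 (fun s₀ s => ∑ a, π' s₀ a * P s₀ a s)
    hK'0 hK'1 μ
  obtain ⟨d, hd0⟩ := aux_exists γ hγ0 hγ1 (fun s₀ s => ∑ a, π s₀ a * P s₀ a s)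
    hK0 hK1 μ
  have hd'c : ∀ s, d' s = (1 - γ) * μ s + γ * ∑ s₀, d' s₀ * ∑ a, π' s₀ a * P s₀ a s := hd'0
  have hdc : ∀ s, d s = (1 - γ) * μ s + γ * ∑ s₀, d s₀ * ∑ a, π s₀ a * P s₀ a s := hd0
  -- expanded fixed-point forms
  have hd'2 : ∀ s, d' s = (1 - γ) * μ s + γ * ∑ s₀, ∑ a, d' s₀ * π' s₀ a * P s₀ a s := by
    intro s
    rw [hd'c s]
    have e : (∑ s₀, d' s₀ * ∑ a, π' s₀ a * P s₀ a s)
        = ∑ s₀, ∑ a, d' s₀ * π' s₀ a * P s₀ a s :=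
      Finset.sum_congr rfl fun s₀ _ => by
        rw [Finset.mul_sum]; exact Finset.sum_congr rfl fun a _ => by ring
    rw [e]
  have hd2 : ∀ s, d s = (1 - γ) * μ s + γ * ∑ s₀, ∑ a, d s₀ * π s₀ a * P s₀ a s := by
    intro s
    rw [hdc s]
    have e : (∑ s₀, d s₀ * ∑ a, π s₀ a * P s₀ a s)
        = ∑ s₀, ∑ a, d s₀ * π s₀ a * P s₀ a s :=
      Finset.sum_congr rfl fun s₀ _ => by
        rw [Finset.mul_sum]; exact Finset.sum_congr rfl fun a _ => by ring
    rw [e]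
  have hdm2 : ∀ s, dm s = (1 - γ) * μ s + γ * ∑ s₀, dm s₀ * ∑ a, π s₀ a * Pm s₀ a s := by
    intro s
    rw [hdm s]
    have e : (∑ s₀, ∑ a, dm s₀ * π s₀ a * Pm s₀ a s)
        = ∑ s₀, dm s₀ * ∑ a, π s₀ a * Pm s₀ a s :=
      Finset.sum_congr rfl fun s₀ _ => by
        rw [Finset.mul_sum]; exact Finset.sum_congr rfl fun a _ => by ring
    rw [e]
  -- performance identities
  have I1 := aux_perf γ π' hπ'1 P hP1 r V' Vm μ d' hV' hd'2
  have I2 := aux_perf γ π hπ1 P hP1 r V Vm μ d hV hd2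
  have I3 := aux_perf γ π hπ1 Pm hPm1 r Vm Vm μ dm hVm hdm
  -- rewrite L
  have I4 : L = ∑ s, dm s * ∑ a, π' s a * ∑ s', Pm s a s' * (r s a s' + γ * Vm s' - Vm s) := by
    rw [hL]
    refine Finset.sum_congr rfl fun s _ => ?_
    rw [Finset.mul_sum]
    refine Finset.sum_congr rfl fun a _ => ?_
    have hpa : π s a ≠ 0 := ne_of_gt (hπpos s a)
    field_simp
  -- L1 norm of d'
  have hn' : ∑ s, |d' s| ≤ 1 :=
    aux_norm γ hγ0 hγ1 (fun s₀ s => ∑ a, π' s₀ a * P s₀ a s) hK'0 hK'1 μ hμ0 hμ1 d' hd'c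
  -- row-wise kernel distance bounds
  have hrow1 : ∀ s₀, ∑ s, |(∑ a, π' s₀ a * P s₀ a s) - ∑ a, π s₀ a * P s₀ a s| ≤ 2 * εpi := by
    intro s₀
    calc ∑ s, |(∑ a, π' s₀ a * P s₀ a s) - ∑ a, π s₀ a * P s₀ a s|
        = ∑ s, |∑ a, (π' s₀ a - π s₀ a) * P s₀ a s| := by
          refine Finset.sum_congr rfl fun s _ => ?_
          congr 1
          rw [← Finset.sum_sub_distrib]
          exact Finset.sum_congr rfl fun a _ => (sub_mul _ _ _).symm
      _ ≤ ∑ a, |π' s₀ a - π s₀ a| :=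
          aux_contract (fun a s => P s₀ a s) (fun a s => hP0 s₀ a s) (fun a => hP1 s₀ a) _
      _ ≤ 2 * εpi := hεpiS s₀
  have hrow2 : ∀ s₀, ∑ s, |(∑ a, π' s₀ a * P s₀ a s) - ∑ a, π s₀ a * Pm s₀ a s|
      ≤ 2 * εpi + 2 * εm := by
    intro s₀
    have hsplit : ∀ s, (∑ a, π' s₀ a * P s₀ a s) - ∑ a, π s₀ a * Pm s₀ a s
        = (∑ a, (π' s₀ a - π s₀ a) * P s₀ a s) + ∑ a, π s₀ a * (P s₀ a s - Pm s₀ a s) := by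
      intro s
      rw [← Finset.sum_add_distrib, ← Finset.sum_sub_distrib]
      exact Finset.sum_congr rfl fun a _ => by ring
    calc ∑ s, |(∑ a, π' s₀ a * P s₀ a s) - ∑ a, π s₀ a * Pm s₀ a s|
        ≤ ∑ s, (|∑ a, (π' s₀ a - π s₀ a) * P s₀ a s|
            + |∑ a, π s₀ a * (P s₀ a s - Pm s₀ a s)|) := by
          refine Finset.sum_le_sum fun s _ => ?_
          rw [hsplit s]; exact abs_add_le _ _
      _ = (∑ s, |∑ a, (π' s₀ a - π s₀ a) * P s₀ a s|)
            + ∑ s, |∑ a, π s₀ a * (P s₀ a s - Pm s₀ a s)| := Finset.sum_add_distrib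
      _ ≤ 2 * εpi + 2 * εm := by
          refine add_le_add ?_ ?_
          · calc ∑ s, |∑ a, (π' s₀ a - π s₀ a) * P s₀ a s|
                ≤ ∑ a, |π' s₀ a - π s₀ a| :=
                  aux_contract (fun a s => P s₀ a s) (fun a s => hP0 s₀ a s)
                    (fun a => hP1 s₀ a) _
              _ ≤ 2 * εpi := hεpiS s₀
          · calc ∑ s, |∑ a, π s₀ a * (P s₀ a s - Pm s₀ a s)|
                ≤ ∑ s, ∑ a, |π s₀ a| * |P s₀ a s - Pm s₀ a s| := by
                  refine Finset.sum_le_sum fun s _ => ?_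
                  refine le_trans (Finset.abs_sum_le_sum_abs _ _) (le_of_eq ?_)
                  exact Finset.sum_congr rfl fun a _ => abs_mul _ _
              _ = ∑ a, |π s₀ a| * ∑ s, |P s₀ a s - Pm s₀ a s| := by
                  rw [Finset.sum_comm]
                  exact Finset.sum_congr rfl fun a _ => (Finset.mul_sum _ _ _).symm
              _ ≤ ∑ a, |π s₀ a| * (2 * εm) :=
                  Finset.sum_le_sum fun a _ =>
                    mul_le_mul_of_nonneg_left (hεmS s₀ a) (abs_nonneg _)
              _ = 2 * εm := by
                  rw [← Finset.sum_mul,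
                    Finset.sum_congr rfl fun a _ => abs_of_pos (hπpos s₀ a), hπ1, one_mul]
  -- distribution distance bounds
  have hdd : ∑ s, |d' s - d s| ≤ γ * (2 * εpi) / (1 - γ) :=
    aux_diff γ hγ0 hγ1 μ (fun s₀ s => ∑ a, π' s₀ a * P s₀ a s)
      (fun s₀ s => ∑ a, π s₀ a * P s₀ a s) hK0 hK1 d' d hd'c hdc hn' (2 * εpi) hrow1
  have hddm : ∑ s, |d' s - dm s| ≤ γ * (2 * εpi + 2 * εm) / (1 - γ) :=
    aux_diff γ hγ0 hγ1 μ (fun s₀ s => ∑ a, π' s₀ a * P s₀ a s)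
      (fun s₀ s => ∑ a, π s₀ a * Pm s₀ a s) hKm0 hKm1 d' dm hd'c hdm2 hn'
      (2 * εpi + 2 * εm) hrow2
  -- pointwise advantage bounds
  have hAmB : ∀ s a, |∑ s', Pm s a s' * (r s a s' + γ * Vm s' - Vm s)| ≤ δmax := by
    intro s a
    have hcp : ∑ s', |Pm s a s'| ≤ 1 := le_of_eq (by
      rw [Finset.sum_congr rfl fun s' _ => abs_of_nonneg (hPm0 s a s'), hPm1])
    have h := aux_abs_sum (fun s' => Pm s a s')
      (fun s' => r s a s' + γ * Vm s' - Vm s) δmax 1 hδ0 (fun s' => hδb s a s') hcp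
    simpa using h
  have hdiffB : ∀ s a, |(∑ s', P s a s' * (r s a s' + γ * Vm s' - Vm s))
      - ∑ s', Pm s a s' * (r s a s' + γ * Vm s' - Vm s)| ≤ 2 * εm * δmax := by
    intro s a
    have e : (∑ s', P s a s' * (r s a s' + γ * Vm s' - Vm s))
        - ∑ s', Pm s a s' * (r s a s' + γ * Vm s' - Vm s)
        = ∑ s', (P s a s' - Pm s a s') * (r s a s' + γ * Vm s' - Vm s) := by
      rw [← Finset.sum_sub_distrib]
      exact Finset.sum_congr rfl fun s' _ => (sub_mul _ _ _).symm
    rw [e]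
    exact aux_abs_sum (fun s' => P s a s' - Pm s a s')
      (fun s' => r s a s' + γ * Vm s' - Vm s) δmax (2 * εm) hδ0
      (fun s' => hδb s a s') (hεmS s a)
  have hBin : (0:ℝ) ≤ 2 * εm * δmax := mul_nonneg (by linarith) hδ0
  -- inner-sum bounds
  have hW1 : ∀ s, |∑ a, (π' s a - π s a) * ((∑ s', P s a s' * (r s a s' + γ * Vm s' - Vm s))
      - ∑ s', Pm s a s' * (r s a s' + γ * Vm s' - Vm s))| ≤ (2 * εpi) * (2 * εm * δmax) :=
    fun s => aux_abs_sum (fun a => π' s a - π s a) _ (2 * εm * δmax) (2 * εpi) hBin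
      (fun a => hdiffB s a) (hεpiS s)
  have hW2 : ∀ s, |∑ a, (π' s a - π s a) * ∑ s', Pm s a s' * (r s a s' + γ * Vm s' - Vm s)|
      ≤ (2 * εpi) * δmax :=
    fun s => aux_abs_sum (fun a => π' s a - π s a) _ δmax (2 * εpi) hδ0
      (fun a => hAmB s a) (hεpiS s)
  have hπabs : ∀ s, ∑ a, |π s a| ≤ 1 := fun s => le_of_eq (by
    rw [Finset.sum_congr rfl fun a _ => abs_of_pos (hπpos s a), hπ1])
  have hW3 : ∀ s, |∑ a, π s a * ((∑ s', P s a s' * (r s a s' + γ * Vm s' - Vm s))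
      - ∑ s', Pm s a s' * (r s a s' + γ * Vm s' - Vm s))| ≤ 1 * (2 * εm * δmax) :=
    fun s => aux_abs_sum (fun a => π s a) _ (2 * εm * δmax) 1 hBin
      (fun a => hdiffB s a) (hπabs s)
  -- bounds on the three terms
  have hT1 : |∑ s, d' s * ∑ a, (π' s a - π s a)
      * ((∑ s', P s a s' * (r s a s' + γ * Vm s' - Vm s))
        - ∑ s', Pm s a s' * (r s a s' + γ * Vm s' - Vm s))|
      ≤ 1 * ((2 * εpi) * (2 * εm * δmax)) :=
    aux_abs_sum d' _ ((2 * εpi) * (2 * εm * δmax)) 1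
      (mul_nonneg (by linarith) hBin) hW1 hn'
  have hT2 : |∑ s, (d' s - dm s) * ∑ a, (π' s a - π s a)
      * ∑ s', Pm s a s' * (r s a s' + γ * Vm s' - Vm s)|
      ≤ (γ * (2 * εpi + 2 * εm) / (1 - γ)) * ((2 * εpi) * δmax) :=
    aux_abs_sum (fun s => d' s - dm s) _ ((2 * εpi) * δmax)
      (γ * (2 * εpi + 2 * εm) / (1 - γ)) (mul_nonneg (by linarith) hδ0) hW2 hddm
  have hT3 : |∑ s, (d' s - d s) * ∑ a, π s a
      * ((∑ s', P s a s' * (r s a s' + γ * Vm s' - Vm s))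
        - ∑ s', Pm s a s' * (r s a s' + γ * Vm s' - Vm s))|
      ≤ (γ * (2 * εpi) / (1 - γ)) * (1 * (2 * εm * δmax)) :=
    aux_abs_sum (fun s => d' s - d s) _ (1 * (2 * εm * δmax))
      (γ * (2 * εpi) / (1 - γ)) (by linarith) hW3 hdd
  -- the algebraic identity
  have idt := aux_identity π π' d d' dm
    (fun s a => ∑ s', P s a s' * (r s a s' + γ * Vm s' - Vm s))
    (fun s a => ∑ s', Pm s a s' * (r s a s' + γ * Vm s' - Vm s)) F1
  have e0 : (∑ s, d' s * ∑ a, π' s a * ∑ s', P s a s' * (r s a s' + γ * Vm s' - Vm s))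
      - (∑ s, d s * ∑ a, π s a * ∑ s', P s a s' * (r s a s' + γ * Vm s' - Vm s))
      = (1 - γ) * (J' - J) := by
    rw [I1, I2, hJ, hJ']; ring
  have e4 : (∑ s, dm s * ∑ a, π s a * ∑ s', Pm s a s' * (r s a s' + γ * Vm s' - Vm s)) = 0 := by
    rw [I3]; ring
  have main_eq : (1 - γ) * (J' - J) - L
      = (∑ s, d' s * ∑ a, (π' s a - π s a)
          * ((∑ s', P s a s' * (r s a s' + γ * Vm s' - Vm s))
            - ∑ s', Pm s a s' * (r s a s' + γ * Vm s' - Vm s)))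
        + (∑ s, (d' s - dm s) * ∑ a, (π' s a - π s a)
            * ∑ s', Pm s a s' * (r s a s' + γ * Vm s' - Vm s))
        + (∑ s, (d' s - d s) * ∑ a, π s a
            * ((∑ s', P s a s' * (r s a s' + γ * Vm s' - Vm s))
              - ∑ s', Pm s a s' * (r s a s' + γ * Vm s' - Vm s))) := by
    rw [I4]
    linarith [idt, e0, e4]
  have key : |(1 - γ) * (J' - J) - L| ≤ 4 * δmax * ε := by
    rw [main_eq]
    refine le_trans (abs_add_le _ _) (le_trans (add_le_add_left (abs_add_le _ _) _) ?_)
    have heq : 1 * ((2 * εpi) * (2 * εm * δmax))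
        + (γ * (2 * εpi + 2 * εm) / (1 - γ)) * ((2 * εpi) * δmax)
        + (γ * (2 * εpi) / (1 - γ)) * (1 * (2 * εm * δmax)) = 4 * δmax * ε := by
      rw [hε]
      field_simp
      ring
    linarith [hT1, hT2, hT3]
  have efin : (J' - J) - L / (1 - γ) = ((1 - γ) * (J' - J) - L) / (1 - γ) := by
    field_simp
  rw [efin, abs_div, abs_of_pos h1γ]
  exact (div_le_div_iff_of_pos_right h1γ).mpr key
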